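/- If (W, ≤) is a well-quasi-order, then the set M(W) of finite multisets over W is a well-quasi-order under the order where M ≤ N iff there is an injection p from M to N (respecting multiplicities) such that m ≤ p(m) for all m in M. -/

import Mathlib

/-- The injection order on finite multisets: `M ≤ N` iff there is an injection
of the occurrences of `M` into the occurrences of `N` (i.e. a sub-multiset `N'`
of `N` in bijective `r`-relation with `M`) relating every element of `M` to an
`r`-larger element of `N`. -/
def MultisetLE {W : Type*} (r : W → W → Prop) (M N : Multiset W) : Prop :=
  ∃ N' ≤ N, Multiset.Rel r M N'

/-- If `(W, ≤)` is a well-quasi-order, then the finite multisets over `W`,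
under the injection order, form a well-quasi-order. -/
theorem multiset_wqo {W : Type*} [Preorder W]
    (hW : ∀ f : ℕ → W, ∃ i j : ℕ, i < j ∧ f i ≤ f j) :
    ∀ g : ℕ → Multiset W, ∃ i j : ℕ, i < j ∧ MultisetLE (· ≤ ·) (g i) (g j) := by
  intro g
  have hpwo : (Set.univ : Set W).PartiallyWellOrderedOn (· ≤ ·) :=
    Set.partiallyWellOrderedOn_iff_exists_lt.2 fun f _ => hW f
  have hl := hpwo.partiallyWellOrderedOn_sublistForall₂ (· ≤ ·)
  obtain ⟨i, j, hij, h⟩ := Set.partiallyWellOrderedOn_iff_exists_lt.1 hl (fun n => (g n).toList) (fun n x _ => Set.mem_univ x)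
  refine ⟨i, j, hij, ?_⟩
  rw [List.sublistForall₂_iff] at h
  obtain ⟨l, hf, hs⟩ := h
  refine ⟨(l : Multiset W), ?_, ?_⟩
  · have h1 : (l : Multiset W) ≤ ((g j).toList : Multiset W) := hs.subperm
    rwa [(g j).coe_toList] at h1
  · have key : ∀ (l₁ l₂ : List W), List.Forall₂ (· ≤ ·) l₁ l₂ →
        Multiset.Rel (· ≤ ·) (l₁ : Multiset W) (l₂ : Multiset W) := by
      intro l₁ l₂ hf
      induction hf with
      | nil => exact Multiset.Rel.zero
      | cons h _ ih => exact Multiset.Rel.cons h ih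
    have h2 := key _ _ hf
    rwa [(g i).coe_toList] at h2
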